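/- Let φ be a CNF formula in which every clause has at least two literals. Define the graph G_φ with: a triangle {x_j^T, x_j^F, e_j} for each variable x_j; a single vertex c_k for each clause; for each literal occurrence l_i a path l_i^1 − l_i^2 − l_i^3 plus an ear vertex adjacent to l_i^2 and l_i^3; edges (c_k, l_i^3) when l_i occurs in c_k; edge (x_j^T, l_i^1) if l_i = x_j and (x_j^F, l_i^1) if l_i = ¬x_j; and all edges among {l_i^1}. Then G_φ has a dominating set of size n + t (n = number of variables, t = number of literal occurrences) if and only if φ is satisfiable. -/

import Mathlib

/-- A CNF formula over variables `x₀, …, x_{n-1}`: a list of clauses, each clause a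
list of literals, where the literal `(b, j)` is `x_j` if `b = true` and `¬x_j` else. -/
structure CNF (n : ℕ) where
  clauses : List (List (Bool × Fin n))

def CNF.Satisfiable {n : ℕ} (φ : CNF n) : Prop :=
  ∃ σ : Fin n → Bool, ∀ c ∈ φ.clauses, ∃ l ∈ c, σ l.2 = l.1

/-- Indices of literal occurrences of `φ`. -/
abbrev CNF.Occ {n : ℕ} (φ : CNF n) :=
  Σ k : Fin φ.clauses.length, Fin (φ.clauses.get k).length

/-- The literal at occurrence `o`. -/
def CNF.lit {n : ℕ} (φ : CNF n) (o : φ.Occ) : Bool × Fin n :=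
  (φ.clauses.get o.1).get o.2

/-- The number `t` of literal occurrences of `φ`. -/
def CNF.t {n : ℕ} (φ : CNF n) : ℕ := (φ.clauses.map List.length).sum

/-- Vertices of the gadget graph `G_φ`. -/
inductive GVert {n : ℕ} (φ : CNF n) : Type
  | varT (j : Fin n)        -- xⱼᵀ
  | varF (j : Fin n)        -- xⱼᶠ
  | varEar (j : Fin n)      -- ear of the variable gadget
  | clause (k : Fin φ.clauses.length)
  | lit1 (o : φ.Occ)
  | lit2 (o : φ.Occ)
  | lit3 (o : φ.Occ)
  | litEar (o : φ.Occ)      -- ear of the literal gadget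

/-- Base edge relation of `G_φ` (symmetrized by `SimpleGraph.fromRel`). -/
def baseRel {n : ℕ} (φ : CNF n) : GVert φ → GVert φ → Prop
  | .varT j, .varF j' => j = j'
  | .varT j, .varEar j' => j = j'
  | .varF j, .varEar j' => j = j'
  | .lit1 o, .lit2 o' => o = o'
  | .lit2 o, .lit3 o' => o = o'
  | .litEar o, .lit2 o' => o = o'
  | .litEar o, .lit3 o' => o = o'
  | .clause k, .lit3 o => o.1 = k
  | .varT j, .lit1 o => φ.lit o = (true, j)
  | .varF j, .lit1 o => φ.lit o = (false, j)
  | .lit1 _, .lit1 _ => True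
  | _, _ => False

/-- The gadget graph `G_φ`. -/
def Gphi {n : ℕ} (φ : CNF n) : SimpleGraph (GVert φ) := SimpleGraph.fromRel (baseRel φ)

def IsDomSet {V : Type*} (G : SimpleGraph V) (D : Finset V) : Prop :=
  ∀ v, v ∉ D → ∃ d ∈ D, G.Adj d v

section Aux

variable {n : ℕ} {φ : CNF n}

/-- An injective encoding of `GVert` into a sum type, giving decidable equality. -/
private def enc : GVert φ →
    (Fin n ⊕ Fin n ⊕ Fin n ⊕ Fin φ.clauses.length ⊕ φ.Occ ⊕ φ.Occ ⊕ φ.Occ ⊕ φ.Occ)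
  | .varT j => .inl j
  | .varF j => .inr (.inl j)
  | .varEar j => .inr (.inr (.inl j))
  | .clause k => .inr (.inr (.inr (.inl k)))
  | .lit1 o => .inr (.inr (.inr (.inr (.inl o))))
  | .lit2 o => .inr (.inr (.inr (.inr (.inr (.inl o)))))
  | .lit3 o => .inr (.inr (.inr (.inr (.inr (.inr (.inl o))))))
  | .litEar o => .inr (.inr (.inr (.inr (.inr (.inr (.inr o))))))

private lemma enc_inj : Function.Injective (enc (φ := φ)) := by
  intro a b h
  cases a <;> cases b <;> simp_all [enc]

instance : DecidableEq (GVert φ) := enc_inj.decidableEq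

private lemma sum_map_get {α : Type*} (f : α → ℕ) (l : List α) :
    ∑ i : Fin l.length, f (l.get i) = (l.map f).sum := by
  induction l with
  | nil => simp
  | cons a l ih => simp [Fin.sum_univ_succ, ih]

private lemma card_occ : Fintype.card φ.Occ = φ.t := by
  rw [CNF.t, ← sum_map_get List.length φ.clauses]
  simp [CNF.Occ, Fintype.card_sigma]

private lemma gphi_adj {a b : GVert φ} :
    (Gphi φ).Adj a b ↔ a ≠ b ∧ (baseRel φ a b ∨ baseRel φ b a) :=
  SimpleGraph.fromRel_adj _ _ _

/-- Which gadget (variable triangle or literal path+ear) a vertex belongs to. -/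
private def gad : GVert φ → Option (Fin n ⊕ φ.Occ)
  | .varT j => some (.inl j)
  | .varF j => some (.inl j)
  | .varEar j => some (.inl j)
  | .lit2 o => some (.inr o)
  | .lit3 o => some (.inr o)
  | .litEar o => some (.inr o)
  | _ => none

end Aux

theorem stmt_17 {n : ℕ} (φ : CNF n) (h2 : ∀ c ∈ φ.clauses, 2 ≤ c.length) :
    (∃ D : Finset (GVert φ), IsDomSet (Gphi φ) D ∧ D.card = n + φ.t) ↔
    φ.Satisfiable := by
  constructor
  · -- hard direction: a dominating set of size n + t yields a satisfying assignment
    rintro ⟨D, hD, hcard⟩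
    -- every ear forces an element of D in its gadget
    have hdom : ∀ x : Fin n ⊕ φ.Occ, ∃ d ∈ D, gad d = some x := by
      rintro (j | o)
      · by_cases hj : GVert.varEar j ∈ D
        · exact ⟨_, hj, rfl⟩
        · obtain ⟨d, hd, hadj⟩ := hD _ hj
          rcases (gphi_adj.mp hadj).2 with h | h
          · cases d <;> simp only [baseRel] at h
            · subst h; exact ⟨_, hd, rfl⟩
            · subst h; exact ⟨_, hd, rfl⟩
          · cases d <;> simp only [baseRel] at h
      · by_cases ho : GVert.litEar o ∈ D
        · exact ⟨_, ho, rfl⟩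
        · obtain ⟨d, hd, hadj⟩ := hD _ ho
          rcases (gphi_adj.mp hadj).2 with h | h
          · cases d <;> simp only [baseRel] at h
          · cases d <;> simp only [baseRel] at h
            · subst h; exact ⟨_, hd, rfl⟩
            · subst h; exact ⟨_, hd, rfl⟩
    choose F hFD hFg using hdom
    have hFinj : Function.Injective F := by
      intro x y h
      have : some x = some y := by rw [← hFg x, h, hFg y]
      exact Option.some_injective _ this
    have hsub : Finset.univ.image F ⊆ D := by
      intro d hd
      obtain ⟨x, -, rfl⟩ := Finset.mem_image.mp hd
      exact hFD x
    have hcard2 : (Finset.univ.image F).card = n + φ.t := by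
      rw [Finset.card_image_of_injective _ hFinj, Finset.card_univ, Fintype.card_sum,
        Fintype.card_fin, card_occ]
    have hEq : Finset.univ.image F = D :=
      Finset.eq_of_subset_of_card_le hsub (by rw [hcard2, hcard])
    have hall : ∀ d ∈ D, ∃ x, F x = d := by
      intro d hd
      rw [← hEq] at hd
      obtain ⟨x, -, hx⟩ := Finset.mem_image.mp hd
      exact ⟨x, hx⟩
    have huniq : ∀ d ∈ D, ∀ d' ∈ D, gad d = gad d' → d = d' := by
      intro d hd d' hd' hg
      obtain ⟨x, rfl⟩ := hall d hd
      obtain ⟨y, rfl⟩ := hall d' hd'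
      have : some x = some y := by rw [← hFg x, hg, hFg y]
      exact congrArg F (Option.some_injective _ this)
    have hnone : ∀ d ∈ D, gad d ≠ none := by
      intro d hd
      obtain ⟨x, rfl⟩ := hall d hd
      rw [hFg]; simp
    refine ⟨fun j => if GVert.varT j ∈ D then true else false, ?_⟩
    intro c hc
    obtain ⟨k, hk⟩ := List.get_of_mem hc
    -- the clause vertex is not in D, so some lit3 dominating it is
    have hcl : GVert.clause k ∉ D := fun h => hnone _ h rfl
    obtain ⟨d, hdD, hadj⟩ := hD _ hcl
    have hd3 : ∃ o : φ.Occ, o.1 = k ∧ GVert.lit3 o ∈ D := by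
      rcases (gphi_adj.mp hadj).2 with h | h
      · cases d <;> simp only [baseRel] at h
      · cases d <;> simp only [baseRel] at h
        exact ⟨_, h, hdD⟩
    obtain ⟨o, hok, h3D⟩ := hd3
    have hlit2 : GVert.lit2 o ∉ D := by
      intro hm
      have := huniq _ hm _ h3D rfl
      simp at this
    have hlit1 : GVert.lit1 o ∉ D := fun h => hnone _ h rfl
    obtain ⟨d', hd'D, hadj'⟩ := hD _ hlit1
    -- the dominator of lit1 must be the matching variable vertex
    have hmem : φ.lit o ∈ c := by
      have hmem0 : φ.lit o ∈ φ.clauses.get o.1 := by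
        rw [CNF.lit]; exact List.get_mem _ o.2
      have hgc : φ.clauses.get o.1 = c := by rw [hok, hk]
      rw [hgc] at hmem0
      exact hmem0
    rcases (gphi_adj.mp hadj').2 with h | h
    · cases d' <;> simp only [baseRel] at h
      · -- varT j, φ.lit o = (true, j)
        rename_i j
        refine ⟨φ.lit o, hmem, ?_⟩
        rw [h]
        simp [hd'D]
      · -- varF j, φ.lit o = (false, j)
        rename_i j
        have hT : GVert.varT j ∉ D := by
          intro hm
          have := huniq _ hm _ hd'D rfl
          simp at this
        refine ⟨φ.lit o, hmem, ?_⟩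
        rw [h]
        simp [hT]
      · exact absurd hd'D (fun h' => hnone _ h' rfl)
    · cases d' <;> simp only [baseRel] at h
      · exact absurd hd'D (fun h' => hnone _ h' rfl)
      · subst h; exact absurd hd'D hlit2
  · -- easy direction: a satisfying assignment yields a dominating set of size n + t
    rintro ⟨σ, hσ⟩
    set f1 : Fin n → GVert φ := fun j => if σ j then .varT j else .varF j with hf1
    set f2 : φ.Occ → GVert φ :=
      fun o => if σ (φ.lit o).2 = (φ.lit o).1 then .lit3 o else .lit2 o with hf2
    set D : Finset (GVert φ) := Finset.univ.image f1 ∪ Finset.univ.image f2 with hDdef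
    have hm1 : ∀ j, f1 j ∈ D :=
      fun j => Finset.mem_union_left _ (Finset.mem_image_of_mem _ (Finset.mem_univ j))
    have hm2 : ∀ o, f2 o ∈ D :=
      fun o => Finset.mem_union_right _ (Finset.mem_image_of_mem _ (Finset.mem_univ o))
    refine ⟨D, ?_, ?_⟩
    · intro v hv
      cases v with
      | varT j =>
        by_cases hσj : σ j
        · exact absurd (by rw [show GVert.varT j = f1 j from (if_pos hσj).symm]; exact hm1 j) hv
        · refine ⟨f1 j, hm1 j, ?_⟩
          rw [show f1 j = GVert.varF j from if_neg hσj, gphi_adj]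
          exact ⟨by simp, Or.inr rfl⟩
      | varF j =>
        by_cases hσj : σ j
        · refine ⟨f1 j, hm1 j, ?_⟩
          rw [show f1 j = GVert.varT j from if_pos hσj, gphi_adj]
          exact ⟨by simp, Or.inl rfl⟩
        · exact absurd (by rw [show GVert.varF j = f1 j from (if_neg hσj).symm]; exact hm1 j) hv
      | varEar j =>
        refine ⟨f1 j, hm1 j, ?_⟩
        by_cases hσj : σ j
        · rw [show f1 j = GVert.varT j from if_pos hσj, gphi_adj]
          exact ⟨by simp, Or.inl rfl⟩
        · rw [show f1 j = GVert.varF j from if_neg hσj, gphi_adj]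
          exact ⟨by simp, Or.inl rfl⟩
      | clause k =>
        obtain ⟨l, hl, hσl⟩ := hσ (φ.clauses.get k) (List.get_mem _ _)
        obtain ⟨i, hi⟩ := List.get_of_mem hl
        refine ⟨f2 ⟨k, i⟩, hm2 ⟨k, i⟩, ?_⟩
        have hlit : φ.lit ⟨k, i⟩ = l := hi
        rw [show f2 ⟨k, i⟩ = GVert.lit3 ⟨k, i⟩ from if_pos (by rw [hlit]; exact hσl), gphi_adj]
        exact ⟨by simp, Or.inr rfl⟩
      | lit1 o =>
        by_cases hs : σ (φ.lit o).2 = (φ.lit o).1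
        · -- the matching variable vertex dominates lit1
          cases hb : (φ.lit o).1 with
          | true =>
            refine ⟨f1 (φ.lit o).2, hm1 _, ?_⟩
            rw [show f1 (φ.lit o).2 = GVert.varT (φ.lit o).2 from if_pos (by rw [hs, hb]),
              gphi_adj]
            refine ⟨by simp, Or.inl ?_⟩
            show φ.lit o = (true, (φ.lit o).2)
            rw [← hb]
          | false =>
            refine ⟨f1 (φ.lit o).2, hm1 _, ?_⟩
            rw [show f1 (φ.lit o).2 = GVert.varF (φ.lit o).2 from
              if_neg (by rw [hs, hb]; simp), gphi_adj]
            refine ⟨by simp, Or.inl ?_⟩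
            show φ.lit o = (false, (φ.lit o).2)
            rw [← hb]
        · refine ⟨f2 o, hm2 o, ?_⟩
          rw [show f2 o = GVert.lit2 o from if_neg hs, gphi_adj]
          exact ⟨by simp, Or.inr rfl⟩
      | lit2 o =>
        by_cases hs : σ (φ.lit o).2 = (φ.lit o).1
        · refine ⟨f2 o, hm2 o, ?_⟩
          rw [show f2 o = GVert.lit3 o from if_pos hs, gphi_adj]
          exact ⟨by simp, Or.inr rfl⟩
        · exact absurd (by rw [show GVert.lit2 o = f2 o from (if_neg hs).symm]; exact hm2 o) hv
      | lit3 o =>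
        by_cases hs : σ (φ.lit o).2 = (φ.lit o).1
        · exact absurd (by rw [show GVert.lit3 o = f2 o from (if_pos hs).symm]; exact hm2 o) hv
        · refine ⟨f2 o, hm2 o, ?_⟩
          rw [show f2 o = GVert.lit2 o from if_neg hs, gphi_adj]
          exact ⟨by simp, Or.inl rfl⟩
      | litEar o =>
        refine ⟨f2 o, hm2 o, ?_⟩
        by_cases hs : σ (φ.lit o).2 = (φ.lit o).1
        · rw [show f2 o = GVert.lit3 o from if_pos hs, gphi_adj]
          exact ⟨by simp, Or.inr rfl⟩
        · rw [show f2 o = GVert.lit2 o from if_neg hs, gphi_adj]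
          exact ⟨by simp, Or.inr rfl⟩
    · have hdisj : Disjoint (Finset.univ.image f1) (Finset.univ.image f2) := by
        rw [Finset.disjoint_left]
        rintro a ha hb
        obtain ⟨j, -, rfl⟩ := Finset.mem_image.mp ha
        obtain ⟨o, -, ho⟩ := Finset.mem_image.mp hb
        simp only [hf1, hf2] at ho
        split_ifs at ho <;> simp at ho
      have hinj1 : Function.Injective f1 := by
        intro a b h
        simp only [hf1] at h
        split_ifs at h <;> simp_all
      have hinj2 : Function.Injective f2 := by
        intro a b h
        simp only [hf2] at h
        split_ifs at h <;> simp_all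
      rw [hDdef, Finset.card_union_of_disjoint hdisj,
        Finset.card_image_of_injective _ hinj1, Finset.card_image_of_injective _ hinj2,
        Finset.card_univ, Finset.card_univ, Fintype.card_fin, card_occ]
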